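/- Let M be a map with flag set F and generators s0, s1, s2, and let r'0, r'1, r'2 be the leapfrog generators on F × {0,1,2}, with Γ(Le(M)) the group of permutations of F × {0,1,2} commuting with r'0, r'1, r'2. If M is a k-orbit map, then the number n of orbits of Γ(Le(M)) on F × {0,1,2} satisfies: n = k, or n = 3k, or k is even and 2n = 3k (i.e. n = 3k/2). -/

import Mathlib

theorem Equiv.Perm.apply_inv_self {α : Type*} (f : Equiv.Perm α) (x : α) : f (f⁻¹ x) = x :=
  Equiv.apply_symm_apply f x

theorem Equiv.Perm.inv_apply_self {α : Type*} (f : Equiv.Perm α) (x : α) : f⁻¹ (f x) = x :=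
  Equiv.symm_apply_apply f x

/-- if M is a k-orbit map, then its leapfrog map Le(M) is a k-orbit,
3k-orbit, or (for k even) 3k/2-orbit map. -/
theorem leapfrog_orbit_count
    {F : Type*} [Fintype F] [Nonempty F]
    (s0 s1 s2 : Equiv.Perm F)
    (hs0i : s0 * s0 = 1) (hs0f : ∀ x, s0 x ≠ x)
    (hs1i : s1 * s1 = 1) (hs1f : ∀ x, s1 x ≠ x)
    (hs2i : s2 * s2 = 1) (hs2f : ∀ x, s2 x ≠ x)
    (hcomm : s0 * s2 = s2 * s0)
    (hs02i : (s0 * s2) * (s0 * s2) = 1) (hs02f : ∀ x, (s0 * s2) x ≠ x)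
    (htrans : ∀ x y : F, ∃ g ∈ Subgroup.closure ({s0, s1, s2} : Set (Equiv.Perm F)), g x = y)
    (l0 l1 l2 : Equiv.Perm (F × Fin 3))
    (hl0 : ∀ Φ : F, l0 (Φ, 0) = (s2 Φ, 0) ∧ l0 (Φ, 1) = (s1 Φ, 1) ∧ l0 (Φ, 2) = (s1 Φ, 2))
    (hl1 : ∀ Φ : F, l1 (Φ, 0) = (Φ, 1) ∧ l1 (Φ, 1) = (Φ, 0) ∧ l1 (Φ, 2) = (s0 Φ, 2))
    (hl2 : ∀ Φ : F, l2 (Φ, 0) = (s0 Φ, 0) ∧ l2 (Φ, 1) = (Φ, 2) ∧ l2 (Φ, 2) = (Φ, 1))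
    (k : ℕ)
    (hk : Nat.card (MulAction.orbitRel.Quotient
      (↥(Subgroup.centralizer ({s0, s1, s2} : Set (Equiv.Perm F)))) F) = k) :
    Nat.card (MulAction.orbitRel.Quotient
      (↥(Subgroup.centralizer ({l0, l1, l2} : Set (Equiv.Perm (F × Fin 3))))) (F × Fin 3)) = k ∨
    Nat.card (MulAction.orbitRel.Quotient
      (↥(Subgroup.centralizer ({l0, l1, l2} : Set (Equiv.Perm (F × Fin 3))))) (F × Fin 3)) = 3 * k ∨
    (Even k ∧ 2 * Nat.card (MulAction.orbitRel.Quotient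
      (↥(Subgroup.centralizer ({l0, l1, l2} : Set (Equiv.Perm (F × Fin 3))))) (F × Fin 3)) = 3 * k) := by
  classical
  have fin3 : ∀ j : Fin 3, j = 0 ∨ j = 1 ∨ j = 2 := by decide
  have hl00 : ∀ Φ, l0 (Φ, 0) = (s2 Φ, 0) := fun Φ => (hl0 Φ).1
  have hl01 : ∀ Φ, l0 (Φ, 1) = (s1 Φ, 1) := fun Φ => (hl0 Φ).2.1
  have hl02 : ∀ Φ, l0 (Φ, 2) = (s1 Φ, 2) := fun Φ => (hl0 Φ).2.2
  have hl10 : ∀ Φ, l1 (Φ, 0) = (Φ, 1) := fun Φ => (hl1 Φ).1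
  have hl11 : ∀ Φ, l1 (Φ, 1) = (Φ, 0) := fun Φ => (hl1 Φ).2.1
  have hl12 : ∀ Φ, l1 (Φ, 2) = (s0 Φ, 2) := fun Φ => (hl1 Φ).2.2
  have hl20 : ∀ Φ, l2 (Φ, 0) = (s0 Φ, 0) := fun Φ => (hl2 Φ).1
  have hl21 : ∀ Φ, l2 (Φ, 1) = (Φ, 2) := fun Φ => (hl2 Φ).2.1
  have hl22 : ∀ Φ, l2 (Φ, 2) = (Φ, 1) := fun Φ => (hl2 Φ).2.2
  set L : Set (Equiv.Perm (F × Fin 3)) := {l0, l1, l2} with hL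
  set S : Set (Equiv.Perm F) := {s0, s1, s2} with hS
  -- the layer homomorphism, pointwise
  have layer : ∀ g ∈ Subgroup.closure L, ∃ π : Equiv.Perm (Fin 3),
      ∀ x : F × Fin 3, (g x).2 = π x.2 := by
    intro g hg
    induction hg using Subgroup.closure_induction with
    | mem x hx =>
      rcases hx with h | h | h
      · subst h
        refine ⟨1, ?_⟩
        rintro ⟨Φ, i⟩
        fin_cases i <;> simp [hl00, hl01, hl02]
      · subst h
        refine ⟨Equiv.swap 0 1, ?_⟩
        rintro ⟨Φ, i⟩
        fin_cases i <;> simp [hl10, hl11, hl12] <;> decide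
      · subst h
        refine ⟨Equiv.swap 1 2, ?_⟩
        rintro ⟨Φ, i⟩
        fin_cases i <;> simp [hl20, hl21, hl22] <;> decide
    | one => exact ⟨1, by simp⟩
    | mul x y hx hy ihx ihy =>
      obtain ⟨π, hπ⟩ := ihx
      obtain ⟨ρ, hρ⟩ := ihy
      exact ⟨π * ρ, fun z => by
        rw [Equiv.Perm.mul_apply, hπ, hρ, Equiv.Perm.mul_apply]⟩
    | inv x hx ih =>
      obtain ⟨π, hπ⟩ := ih
      refine ⟨π⁻¹, fun z => ?_⟩
      have h1 : (x (x⁻¹ z)).2 = π ((x⁻¹ z).2) := hπ _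
      rw [Equiv.Perm.apply_inv_self] at h1
      rw [h1, Equiv.Perm.inv_apply_self]
  -- lift elements of Mon to leapfrog words acting on layer 0
  have lift0 : ∀ g ∈ Subgroup.closure S, ∃ g' ∈ Subgroup.closure L,
      ∀ Φ : F, g' (Φ, (0 : Fin 3)) = (g Φ, 0) := by
    intro g hg
    induction hg using Subgroup.closure_induction with
    | mem x hx =>
      rcases hx with h | h | h
      · subst h
        exact ⟨l2, Subgroup.subset_closure (by simp [hL]), fun Φ => hl20 Φ⟩
      · subst h
        refine ⟨l1 * l0 * l1, ?_, fun Φ => ?_⟩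
        · exact mul_mem (mul_mem (Subgroup.subset_closure (by simp [hL]))
            (Subgroup.subset_closure (by simp [hL]))) (Subgroup.subset_closure (by simp [hL]))
        · rw [Equiv.Perm.mul_apply, Equiv.Perm.mul_apply, hl10, hl01, hl11]
      · subst h
        exact ⟨l0, Subgroup.subset_closure (by simp [hL]), fun Φ => hl00 Φ⟩
    | one => exact ⟨1, one_mem _, fun Φ => by simp⟩
    | mul x y hx hy ihx ihy =>
      obtain ⟨x', hx', hxe⟩ := ihx
      obtain ⟨y', hy', hye⟩ := ihy
      exact ⟨x' * y', mul_mem hx' hy', fun Φ => by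
        rw [Equiv.Perm.mul_apply, hye, hxe, Equiv.Perm.mul_apply]⟩
    | inv x hx ih =>
      obtain ⟨x', hx', hxe⟩ := ih
      refine ⟨x'⁻¹, inv_mem hx', fun Φ => ?_⟩
      have h1 : x' (x⁻¹ Φ, (0 : Fin 3)) = (Φ, 0) := by
        rw [hxe, Equiv.Perm.apply_inv_self]
      calc x'⁻¹ (Φ, (0 : Fin 3)) = x'⁻¹ (x' (x⁻¹ Φ, 0)) := by rw [h1]
        _ = (x⁻¹ Φ, 0) := Equiv.Perm.inv_apply_self _ _
  -- transitivity of the leapfrog monodromy group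
  have transX : ∀ x y : F × Fin 3, ∃ g ∈ Subgroup.closure L, g x = y := by
    have conn : ∀ (Φ : F) (i : Fin 3), ∃ h ∈ Subgroup.closure L, h (Φ, (0 : Fin 3)) = (Φ, i) := by
      intro Φ i
      fin_cases i
      · exact ⟨1, one_mem _, by simp⟩
      · exact ⟨l1, Subgroup.subset_closure (by simp [hL]), hl10 Φ⟩
      · refine ⟨l2 * l1, mul_mem (Subgroup.subset_closure (by simp [hL]))
          (Subgroup.subset_closure (by simp [hL])), ?_⟩
        rw [Equiv.Perm.mul_apply, hl10, hl21]
        rfl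
    rintro ⟨Φ, i⟩ ⟨Ψ, j⟩
    obtain ⟨h₁, hh₁, he₁⟩ := conn Φ i
    obtain ⟨g, hg, hge⟩ := htrans Φ Ψ
    obtain ⟨g', hg', hge'⟩ := lift0 g hg
    obtain ⟨h₂, hh₂, he₂⟩ := conn Ψ j
    refine ⟨h₂ * g' * h₁⁻¹, mul_mem (mul_mem hh₂ hg') (inv_mem hh₁), ?_⟩
    have e1 : h₁⁻¹ (Φ, i) = (Φ, (0 : Fin 3)) := by
      rw [← he₁, Equiv.Perm.inv_apply_self]
    rw [Equiv.Perm.mul_apply, Equiv.Perm.mul_apply, e1, hge', hge, he₂]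
  -- elements of the centralizer commute with everything in the closure
  have commClos : ∀ δ ∈ Subgroup.centralizer L, ∀ g ∈ Subgroup.closure L,
      ∀ x : F × Fin 3, δ (g x) = g (δ x) := by
    intro δ hδ g hg x
    have hle : Subgroup.closure L ≤ Subgroup.centralizer {δ} := by
      rw [Subgroup.closure_le]
      intro z hz
      rw [SetLike.mem_coe, Subgroup.mem_centralizer_iff]
      intro w hw
      rcases hw with rfl
      exact (Subgroup.mem_centralizer_iff.mp hδ z hz).symm
    have hc : δ * g = g * δ := Subgroup.mem_centralizer_iff.mp (hle hg) δ rfl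
    calc δ (g x) = (δ * g) x := (Equiv.Perm.mul_apply _ _ _).symm
      _ = (g * δ) x := by rw [hc]
      _ = g (δ x) := Equiv.Perm.mul_apply _ _ _
  -- twistedness is all-or-nothing
  have contag : ∀ δ ∈ Subgroup.centralizer L, (∃ x : F × Fin 3, (δ x).2 ≠ x.2) →
      ∀ y : F × Fin 3, (δ y).2 ≠ y.2 := by
    rintro δ hδ ⟨x, hx⟩ y
    obtain ⟨g, hg, hgx⟩ := transX x y
    obtain ⟨π, hπ⟩ := layer g hg
    have h1 : δ y = g (δ x) := by rw [← hgx, commClos δ hδ g hg]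
    rw [h1, ← hgx, hπ, hπ]
    exact fun h => hx (π.injective h)
  -- orbit equality characterizations
  set Q : Type _ := MulAction.orbitRel.Quotient (↥(Subgroup.centralizer S)) F with hQ
  set Q' : Type _ := MulAction.orbitRel.Quotient
    (↥(Subgroup.centralizer L)) (F × Fin 3) with hQ'
  haveI hQ'fin : Finite Q' := Quotient.finite _
  have orbEq : ∀ x y : F × Fin 3,
      ((Quotient.mk'' x : Q') = Quotient.mk'' y) ↔ ∃ δ ∈ Subgroup.centralizer L, δ y = x := by
    intro x y
    constructor
    · intro h
      have h' : x ∈ MulAction.orbit (↥(Subgroup.centralizer L)) y := Quotient.eq''.mp h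
      obtain ⟨δ, hδ⟩ := MulAction.mem_orbit_iff.mp h'
      exact ⟨δ.1, δ.2, hδ⟩
    · rintro ⟨δ, hδ, he⟩
      exact Quotient.eq''.mpr (MulAction.mem_orbit_iff.mpr ⟨⟨δ, hδ⟩, he⟩)
  have orbEqF : ∀ x y : F,
      ((Quotient.mk'' x : Q) = Quotient.mk'' y) ↔ ∃ γ ∈ Subgroup.centralizer S, γ y = x := by
    intro x y
    constructor
    · intro h
      have h' : x ∈ MulAction.orbit (↥(Subgroup.centralizer S)) y := Quotient.eq''.mp h
      obtain ⟨γ, hγ⟩ := MulAction.mem_orbit_iff.mp h'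
      exact ⟨γ.1, γ.2, hγ⟩
    · rintro ⟨γ, hγ, he⟩
      exact Quotient.eq''.mpr (MulAction.mem_orbit_iff.mpr ⟨⟨γ, hγ⟩, he⟩)
  -- the three layer embeddings on orbit spaces
  have fex : ∀ i : Fin 3, ∃ f : Q → Q',
      ∀ Φ : F, f (Quotient.mk'' Φ) = Quotient.mk'' (Φ, i) := by
    intro i
    have wd : ∀ a b : F, (MulAction.orbitRel (↥(Subgroup.centralizer S)) F) a b →
        ((Quotient.mk'' (a, i) : Q') = Quotient.mk'' (b, i)) := by
      intro a b hab
      have hab' : a ∈ MulAction.orbit (↥(Subgroup.centralizer S)) b := hab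
      obtain ⟨γ', hγe⟩ := MulAction.mem_orbit_iff.mp hab'
      obtain ⟨γ, hγ⟩ := γ'
      have hge : γ b = a := hγe
      have c0 : ∀ x, s0 (γ x) = γ (s0 x) := by
        intro x
        have := Subgroup.mem_centralizer_iff.mp hγ s0 (by simp [hS])
        calc s0 (γ x) = (s0 * γ) x := rfl
          _ = (γ * s0) x := by rw [this]
          _ = γ (s0 x) := rfl
      have c1 : ∀ x, s1 (γ x) = γ (s1 x) := by
        intro x
        have := Subgroup.mem_centralizer_iff.mp hγ s1 (by simp [hS])
        calc s1 (γ x) = (s1 * γ) x := rfl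
          _ = (γ * s1) x := by rw [this]
          _ = γ (s1 x) := rfl
      have c2 : ∀ x, s2 (γ x) = γ (s2 x) := by
        intro x
        have := Subgroup.mem_centralizer_iff.mp hγ s2 (by simp [hS])
        calc s2 (γ x) = (s2 * γ) x := rfl
          _ = (γ * s2) x := by rw [this]
          _ = γ (s2 x) := rfl
      set δ : Equiv.Perm (F × Fin 3) := Equiv.prodCongr γ (Equiv.refl (Fin 3)) with hδdef
      have δap : ∀ (Φ : F) (j : Fin 3), δ (Φ, j) = (γ Φ, j) := by
        intro Φ j; simp [hδdef]
      have hδmem : δ ∈ Subgroup.centralizer L := by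
        rw [Subgroup.mem_centralizer_iff]
        intro h hh
        rcases hh with rfl | rfl | rfl
        · refine Equiv.ext ?_
          rintro ⟨Φ, j⟩
          rcases fin3 j with rfl | rfl | rfl
          · rw [Equiv.Perm.mul_apply, Equiv.Perm.mul_apply, δap, hl00, hl00, δap, c2]
          · rw [Equiv.Perm.mul_apply, Equiv.Perm.mul_apply, δap, hl01, hl01, δap, c1]
          · rw [Equiv.Perm.mul_apply, Equiv.Perm.mul_apply, δap, hl02, hl02, δap, c1]
        · refine Equiv.ext ?_
          rintro ⟨Φ, j⟩
          rcases fin3 j with rfl | rfl | rfl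
          · rw [Equiv.Perm.mul_apply, Equiv.Perm.mul_apply, δap, hl10, hl10, δap]
          · rw [Equiv.Perm.mul_apply, Equiv.Perm.mul_apply, δap, hl11, hl11, δap]
          · rw [Equiv.Perm.mul_apply, Equiv.Perm.mul_apply, δap, hl12, hl12, δap, c0]
        · refine Equiv.ext ?_
          rintro ⟨Φ, j⟩
          rcases fin3 j with rfl | rfl | rfl
          · rw [Equiv.Perm.mul_apply, Equiv.Perm.mul_apply, δap, hl20, hl20, δap, c0]
          · rw [Equiv.Perm.mul_apply, Equiv.Perm.mul_apply, δap, hl21, hl21, δap]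
          · rw [Equiv.Perm.mul_apply, Equiv.Perm.mul_apply, δap, hl22, hl22, δap]
      exact (orbEq (a, i) (b, i)).mpr ⟨δ, hδmem, by rw [δap, hge]⟩
    exact ⟨Quotient.lift (fun Φ => (Quotient.mk'' (Φ, i) : Q')) wd, fun Φ => rfl⟩
  -- injectivity of the layer embeddings on orbit spaces
  have finj : ∀ (i : Fin 3) (a b : F),
      ((Quotient.mk'' (a, i) : Q') = Quotient.mk'' (b, i)) →
      ((Quotient.mk'' a : Q) = Quotient.mk'' b) := by
    intro i a b h
    obtain ⟨δ, hδ, hδe⟩ := (orbEq _ _).mp h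
    have hpres : ∀ y : F × Fin 3, (δ y).2 = y.2 := by
      by_contra hcon
      push_neg at hcon
      obtain ⟨y, hy⟩ := hcon
      exact (contag δ hδ ⟨y, hy⟩ (b, i)) (by rw [hδe])
    have d0 : ∀ x, δ (l0 x) = l0 (δ x) := by
      intro x
      exact commClos δ hδ l0 (Subgroup.subset_closure (by simp [hL])) x
    have d1 : ∀ x, δ (l1 x) = l1 (δ x) := by
      intro x
      exact commClos δ hδ l1 (Subgroup.subset_closure (by simp [hL])) x
    have d2 : ∀ x, δ (l2 x) = l2 (δ x) := by
      intro x
      exact commClos δ hδ l2 (Subgroup.subset_closure (by simp [hL])) x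
    -- δ sends (b,0) to (a,0)
    have key : δ (b, (0 : Fin 3)) = (a, 0) := by
      rcases fin3 i with rfl | rfl | rfl
      · exact hδe
      · calc δ (b, (0 : Fin 3)) = δ (l1 (b, 1)) := by rw [hl11]
          _ = l1 (δ (b, 1)) := d1 _
          _ = l1 (a, 1) := by rw [hδe]
          _ = (a, 0) := hl11 a
      · have e1 : δ (b, (1 : Fin 3)) = (a, 1) := by
          calc δ (b, (1 : Fin 3)) = δ (l2 (b, 2)) := by rw [hl22]
            _ = l2 (δ (b, 2)) := d2 _
            _ = l2 (a, 2) := by rw [hδe]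
            _ = (a, 1) := hl22 a
        calc δ (b, (0 : Fin 3)) = δ (l1 (b, 1)) := by rw [hl11]
          _ = l1 (δ (b, 1)) := d1 _
          _ = l1 (a, 1) := by rw [e1]
          _ = (a, 0) := hl11 a
    set γ0 : F → F := fun Φ => (δ (Φ, (0 : Fin 3))).1 with hγ0
    have hδ0 : ∀ Φ : F, δ (Φ, (0 : Fin 3)) = (γ0 Φ, 0) :=
      fun Φ => Prod.ext rfl (hpres (Φ, 0))
    have γinj : Function.Injective γ0 := by
      intro a' b' h'
      have e1 : δ (a', (0 : Fin 3)) = δ (b', (0 : Fin 3)) := by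
        rw [hδ0, hδ0, h']
      have := δ.injective e1
      exact congrArg Prod.fst this
    let γ : Equiv.Perm F := Equiv.ofBijective γ0 (Finite.injective_iff_bijective.mp γinj)
    have γap : ∀ Φ, γ Φ = γ0 Φ := fun _ => rfl
    -- commutation of γ0 with the generators
    have cg0 : ∀ x, γ0 (s0 x) = s0 (γ0 x) := by
      intro x
      have e1 : δ (s0 x, (0 : Fin 3)) = (s0 (γ0 x), 0) := by
        calc δ (s0 x, (0 : Fin 3)) = δ (l2 (x, 0)) := by rw [hl20]
          _ = l2 (δ (x, 0)) := d2 _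
          _ = l2 (γ0 x, 0) := by rw [hδ0]
          _ = (s0 (γ0 x), 0) := hl20 _
      have := hδ0 (s0 x)
      rw [e1] at this
      exact (congrArg Prod.fst this).symm
    have cg2 : ∀ x, γ0 (s2 x) = s2 (γ0 x) := by
      intro x
      have e1 : δ (s2 x, (0 : Fin 3)) = (s2 (γ0 x), 0) := by
        calc δ (s2 x, (0 : Fin 3)) = δ (l0 (x, 0)) := by rw [hl00]
          _ = l0 (δ (x, 0)) := d0 _
          _ = l0 (γ0 x, 0) := by rw [hδ0]
          _ = (s2 (γ0 x), 0) := hl00 _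
      have := hδ0 (s2 x)
      rw [e1] at this
      exact (congrArg Prod.fst this).symm
    have cg1 : ∀ x, γ0 (s1 x) = s1 (γ0 x) := by
      intro x
      have e1 : δ (s1 x, (0 : Fin 3)) = (s1 (γ0 x), 0) := by
        calc δ (s1 x, (0 : Fin 3)) = δ (l1 (l0 (l1 (x, 0)))) := by
              rw [hl10, hl01, hl11]
          _ = l1 (l0 (l1 (δ (x, 0)))) := by rw [d1, d0, d1]
          _ = l1 (l0 (l1 (γ0 x, 0))) := by rw [hδ0]
          _ = (s1 (γ0 x), 0) := by rw [hl10, hl01, hl11]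
      have := hδ0 (s1 x)
      rw [e1] at this
      exact (congrArg Prod.fst this).symm
    have γmem : γ ∈ Subgroup.centralizer S := by
      rw [Subgroup.mem_centralizer_iff]
      intro g hg
      rcases hg with rfl | rfl | rfl
      · refine Equiv.ext ?_
        intro x
        rw [Equiv.Perm.mul_apply, Equiv.Perm.mul_apply, γap, γap, cg0]
      · refine Equiv.ext ?_
        intro x
        rw [Equiv.Perm.mul_apply, Equiv.Perm.mul_apply, γap, γap, cg1]
      · refine Equiv.ext ?_
        intro x
        rw [Equiv.Perm.mul_apply, Equiv.Perm.mul_apply, γap, γap, cg2]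
    refine (orbEqF a b).mpr ⟨γ, γmem, ?_⟩
    have : γ0 b = a := congrArg Prod.fst key
    rw [γap, this]
  -- choose the layer embeddings
  choose f hf using fex
  set A : Fin 3 → Set Q' := fun i => Set.range (f i) with hA
  have mkSurj : ∀ o : Q', ∃ x : F × Fin 3, (Quotient.mk'' x : Q') = o := fun o =>
    Quotient.inductionOn' o (fun x => ⟨x, rfl⟩)
  have mkSurjF : ∀ q : Q, ∃ Φ : F, (Quotient.mk'' Φ : Q) = q := fun q =>
    Quotient.inductionOn' q (fun Φ => ⟨Φ, rfl⟩)
  have memA : ∀ (i : Fin 3) (o : Q'), o ∈ A i ↔ ∃ Φ : F, (Quotient.mk'' (Φ, i) : Q') = o := by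
    intro i o
    constructor
    · rintro ⟨q, rfl⟩
      obtain ⟨Φ, hΦ⟩ := mkSurjF q
      exact ⟨Φ, by rw [← hf i Φ, hΦ]⟩
    · rintro ⟨Φ, hΦ⟩
      exact ⟨Quotient.mk'' Φ, by rw [hf i Φ, hΦ]⟩
  have self : ∀ x : F × Fin 3, (Quotient.mk'' x : Q') ∈ A x.2 := by
    intro x
    exact (memA x.2 _).mpr ⟨x.1, rfl⟩
  have cardA : ∀ i : Fin 3, (A i).ncard = k := by
    intro i
    have inj : Function.Injective (f i) := by
      intro q1 q2 hq
      revert hq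
      refine Quotient.inductionOn₂' q1 q2 ?_
      intro a b hq
      rw [hf i a, hf i b] at hq
      exact finj i a b hq
    calc (A i).ncard = (f i '' Set.univ).ncard := by rw [Set.image_univ]
      _ = (Set.univ : Set Q).ncard := Set.ncard_image_of_injective _ inj
      _ = Nat.card Q := Set.ncard_univ Q
      _ = k := hk
  -- main case analysis
  by_cases htw : ∃ δ ∈ Subgroup.centralizer L, ∃ x : F × Fin 3, (δ x).2 ≠ x.2
  · -- some automorphism moves layers: every orbit meets at least two layers
    obtain ⟨δt, hδt, xt, hxt⟩ := htw
    have hδtall : ∀ y : F × Fin 3, (δt y).2 ≠ y.2 := contag δt hδt ⟨xt, hxt⟩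
    have two : ∀ o : Q', ∃ i j : Fin 3, i ≠ j ∧ o ∈ A i ∧ o ∈ A j := by
      intro o
      obtain ⟨x, hx⟩ := mkSurj o
      refine ⟨x.2, (δt x).2, Ne.symm (hδtall x), ?_, ?_⟩
      · rw [← hx]; exact self x
      · rw [← hx]
        have e : (Quotient.mk'' x : Q') = Quotient.mk'' (δt x) :=
          (orbEq _ _).mpr ⟨δt⁻¹, inv_mem hδt, Equiv.Perm.inv_apply_self _ _⟩
        rw [e]; exact self (δt x)
    by_cases h3 : ∃ o : Q', o ∈ A 0 ∧ o ∈ A 1 ∧ o ∈ A 2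
    · -- some (hence every) orbit meets all three layers: Le(M) is a k-orbit map
      obtain ⟨o, ho0, ho1, ho2⟩ := h3
      obtain ⟨Φ0, e0⟩ := (memA 0 o).mp ho0
      obtain ⟨Φ1, e1⟩ := (memA 1 o).mp ho1
      obtain ⟨Φ2, e2⟩ := (memA 2 o).mp ho2
      obtain ⟨δ1, hδ1, hδ1e⟩ := (orbEq ((Φ1), (1 : Fin 3)) ((Φ0), (0 : Fin 3))).mp
        (e1.trans e0.symm)
      obtain ⟨δ2, hδ2, hδ2e⟩ := (orbEq ((Φ2), (2 : Fin 3)) ((Φ0), (0 : Fin 3))).mp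
        (e2.trans e0.symm)
      have t1 : ∀ y : F × Fin 3, (δ1 y).2 ≠ y.2 :=
        contag δ1 hδ1 ⟨(Φ0, 0), by rw [hδ1e]; exact (by decide : (1 : Fin 3) ≠ 0)⟩
      have t2 : ∀ y : F × Fin 3, (δ2 y).2 ≠ y.2 :=
        contag δ2 hδ2 ⟨(Φ0, 0), by rw [hδ2e]; exact (by decide : (2 : Fin 3) ≠ 0)⟩
      have t12 : ∀ y : F × Fin 3, (δ2 y).2 ≠ (δ1 y).2 := by
        intro y
        have hmem : δ2 * δ1⁻¹ ∈ Subgroup.centralizer L := mul_mem hδ2 (inv_mem hδ1)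
        have tw : ∃ x : F × Fin 3, ((δ2 * δ1⁻¹) x).2 ≠ x.2 := by
          refine ⟨δ1 (Φ0, 0), ?_⟩
          rw [Equiv.Perm.mul_apply, Equiv.Perm.inv_apply_self, hδ2e, hδ1e]
          exact (by decide : (2 : Fin 3) ≠ 1)
        have h' := contag _ hmem tw (δ1 y)
        rw [Equiv.Perm.mul_apply, Equiv.Perm.inv_apply_self] at h'
        exact h'
      have surj0 : ∀ o' : Q', o' ∈ A 0 := by
        intro o'
        obtain ⟨y, hy⟩ := mkSurj o'
        have trich : y.2 = 0 ∨ (δ1 y).2 = 0 ∨ (δ2 y).2 = 0 := by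
          have d1 := t1 y; have d2 := t2 y; have d12 := t12 y
          revert d1 d2 d12
          generalize y.2 = a
          generalize (δ1 y).2 = b'
          generalize (δ2 y).2 = c'
          revert a b' c'; decide
        rcases trich with h0 | h0 | h0
        · refine (memA 0 o').mpr ⟨y.1, ?_⟩
          rw [← hy, show ((y.1, (0 : Fin 3))) = y from Prod.ext rfl h0.symm]
        · refine (memA 0 o').mpr ⟨(δ1 y).1, ?_⟩
          rw [← hy, show (((δ1 y).1, (0 : Fin 3))) = δ1 y from Prod.ext rfl h0.symm]
          exact (orbEq _ _).mpr ⟨δ1, hδ1, rfl⟩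
        · refine (memA 0 o').mpr ⟨(δ2 y).1, ?_⟩
          rw [← hy, show (((δ2 y).1, (0 : Fin 3))) = δ2 y from Prod.ext rfl h0.symm]
          exact (orbEq _ _).mpr ⟨δ2, hδ2, rfl⟩
      left
      calc Nat.card Q' = (Set.univ : Set Q').ncard := (Set.ncard_univ Q').symm
        _ = (A 0).ncard := by
            rw [(Set.eq_of_subset_of_subset (fun o' _ => surj0 o') (Set.subset_univ _)).symm]
        _ = k := cardA 0
    · -- every orbit meets exactly two layers: 2n = 3k
      have notall : ∀ o : Q', ¬(o ∈ A 0 ∧ o ∈ A 1 ∧ o ∈ A 2) := fun o hall => h3 ⟨o, hall⟩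
      have pairs : ∀ o : Q',
          (o ∈ A 0 ∧ o ∈ A 1) ∨ (o ∈ A 0 ∧ o ∈ A 2) ∨ (o ∈ A 1 ∧ o ∈ A 2) := by
        intro o
        obtain ⟨i, j, hij, hi, hj⟩ := two o
        rcases fin3 i with rfl | rfl | rfl <;> rcases fin3 j with rfl | rfl | rfl <;>
          first | exact absurd rfl hij | tauto
      set P0 : Set Q' := (A 1 ∩ A 2) \ A 0 with hP0
      set P1 : Set Q' := (A 0 ∩ A 2) \ A 1 with hP1
      set P2 : Set Q' := (A 0 ∩ A 1) \ A 2 with hP2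
      have dP01 : Disjoint P0 P1 := by
        rw [Set.disjoint_left]
        rintro o ⟨⟨h1, h2⟩, h0⟩ ⟨⟨g0, g2⟩, g1⟩
        exact h0 g0
      have dP02 : Disjoint P0 P2 := by
        rw [Set.disjoint_left]
        rintro o ⟨⟨h1, h2⟩, h0⟩ ⟨⟨g0, g1⟩, g2⟩
        exact h0 g0
      have dP12 : Disjoint P1 P2 := by
        rw [Set.disjoint_left]
        rintro o ⟨⟨h0, h2⟩, h1⟩ ⟨⟨g0, g1⟩, g2⟩
        exact h1 g1
      have eA0 : A 0 = P1 ∪ P2 := by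
        ext o
        have hp := pairs o
        have hn := notall o
        simp only [hP1, hP2, Set.mem_union, Set.mem_diff, Set.mem_inter_iff]
        tauto
      have eA1 : A 1 = P0 ∪ P2 := by
        ext o
        have hp := pairs o
        have hn := notall o
        simp only [hP0, hP2, Set.mem_union, Set.mem_diff, Set.mem_inter_iff]
        tauto
      have eA2 : A 2 = P0 ∪ P1 := by
        ext o
        have hp := pairs o
        have hn := notall o
        simp only [hP0, hP1, Set.mem_union, Set.mem_diff, Set.mem_inter_iff]
        tauto
      have cover2 : (Set.univ : Set Q') = P0 ∪ P1 ∪ P2 := by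
        apply Set.eq_of_subset_of_subset _ (Set.subset_univ _)
        intro o _
        rcases pairs o with ⟨h0, h1⟩ | ⟨h0, h2⟩ | ⟨h1, h2⟩
        · exact Set.mem_union_right _ ⟨⟨h0, h1⟩, fun h2 => notall o ⟨h0, h1, h2⟩⟩
        · exact Set.mem_union_left _
            (Set.mem_union_right _ ⟨⟨h0, h2⟩, fun h1 => notall o ⟨h0, h1, h2⟩⟩)
        · exact Set.mem_union_left _
            (Set.mem_union_left _ ⟨⟨h1, h2⟩, fun h0 => notall o ⟨h0, h1, h2⟩⟩)
      have n0 : k = P1.ncard + P2.ncard := by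
        rw [← cardA 0, eA0, Set.ncard_union_eq dP12]
      have n1 : k = P0.ncard + P2.ncard := by
        rw [← cardA 1, eA1, Set.ncard_union_eq dP02]
      have n2 : k = P0.ncard + P1.ncard := by
        rw [← cardA 2, eA2, Set.ncard_union_eq dP01]
      have ntot : Nat.card Q' = P0.ncard + P1.ncard + P2.ncard := by
        rw [← Set.ncard_univ, cover2,
          Set.ncard_union_eq (by rw [Set.disjoint_union_left]; exact ⟨dP02, dP12⟩),
          Set.ncard_union_eq dP01]
      right; right
      constructor
      · rw [Nat.even_iff]; omega
      · omega
  · -- no automorphism moves layers: Le(M) is a 3k-orbit map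
    have disj : ∀ i j : Fin 3, i ≠ j → Disjoint (A i) (A j) := by
      intro i j hij
      rw [Set.disjoint_left]
      intro o hoi hoj
      obtain ⟨Φ, hΦ⟩ := (memA i o).mp hoi
      obtain ⟨Ψ, hΨ⟩ := (memA j o).mp hoj
      obtain ⟨δ, hδ, hδe⟩ := (orbEq ((Φ), i) ((Ψ), j)).mp (hΦ.trans hΨ.symm)
      refine htw ⟨δ, hδ, (Ψ, j), ?_⟩
      rw [hδe]
      exact hij
    have cover : (Set.univ : Set Q') = A 0 ∪ A 1 ∪ A 2 := by
      apply Set.eq_of_subset_of_subset _ (Set.subset_univ _)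
      intro o _
      obtain ⟨x, hx⟩ := mkSurj o
      have hx2 := self x
      rcases fin3 x.2 with h | h | h <;> rw [h] at hx2 <;> rw [← hx]
      · exact Set.mem_union_left _ (Set.mem_union_left _ hx2)
      · exact Set.mem_union_left _ (Set.mem_union_right _ hx2)
      · exact Set.mem_union_right _ hx2
    right; left
    calc Nat.card Q' = (Set.univ : Set Q').ncard := (Set.ncard_univ Q').symm
      _ = (A 0).ncard + (A 1).ncard + (A 2).ncard := by
          rw [cover, Set.ncard_union_eq (by
              rw [Set.disjoint_union_left]
              exact ⟨disj 0 2 (by decide), disj 1 2 (by decide)⟩),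
            Set.ncard_union_eq (disj 0 1 (by decide))]
      _ = 3 * k := by rw [cardA 0, cardA 1, cardA 2]; ring
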